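/- Under the hypotheses of the contraction result (μ(∂F/∂x(t,x)) ≤ c on a convex invariant set 𝒳), for all x₁, x₂ ∈ 𝒳 and t ≥ 0: limsup_{(z₁,z₂)→(x₁,x₂), z₁−z₂∉S} d(z₁−z₂)·(F(t,x₁) − F(t,x₂)) ≤ c |x₁ − x₂|, where d(z) = ∇|z| for z ∉ S. -/

import Mathlib

open Filter Set MeasureTheory

/-- `N` is a norm on `ℝⁿ`. -/
def IsNorm {n : ℕ} (N : (Fin n → ℝ) → ℝ) : Prop :=
  (∀ x, N x = 0 ↔ x = 0) ∧ (∀ (c : ℝ) x, N (c • x) = |c| * N x) ∧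
    (∀ x y, N (x + y) ≤ N x + N y)

/-- The matrix norm induced by the vector norm `N`. -/
noncomputable def opNorm {n : ℕ} (N : (Fin n → ℝ) → ℝ)
    (A : Matrix (Fin n) (Fin n) ℝ) : ℝ :=
  sSup ((fun x => N (A.mulVec x)) '' {x | N x = 1})

/-- `m` is the matrix measure of `A` induced by the vector norm `N`. -/
def HasMatrixMeasure {n : ℕ} (N : (Fin n → ℝ) → ℝ)
    (A : Matrix (Fin n) (Fin n) ℝ) (m : ℝ) : Prop :=
  Tendsto (fun h : ℝ => (opNorm N (1 + h • A) - 1) / h)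
    (nhdsWithin 0 (Ioi 0)) (nhds m)

variable {n : ℕ} {N : (Fin n → ℝ) → ℝ}

lemma IsNorm.zero (hN : IsNorm N) : N 0 = 0 := (hN.1 0).mpr rfl

lemma IsNorm.neg (hN : IsNorm N) (x) : N (-x) = N x := by
  have := hN.2.1 (-1) x
  simpa using this

lemma IsNorm.nonneg (hN : IsNorm N) (x) : 0 ≤ N x := by
  have h := hN.2.2 x (-x)
  rw [add_neg_cancel, hN.zero, hN.neg] at h
  linarith

lemma IsNorm.sub_le (hN : IsNorm N) (x y) : N x - N y ≤ N (x - y) := by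
  have h := hN.2.2 (x - y) y
  rw [sub_add_cancel] at h
  linarith

lemma IsNorm.sum_le (hN : IsNorm N) {ι : Type*} (s : Finset ι) (f : ι → (Fin n → ℝ)) :
    N (∑ i ∈ s, f i) ≤ ∑ i ∈ s, N (f i) := by
  classical
  induction s using Finset.cons_induction with
  | empty => simp [hN.zero]
  | cons a s ha ih =>
    rw [Finset.sum_cons, Finset.sum_cons]
    exact (hN.2.2 _ _).trans (by linarith)

lemma IsNorm.exists_upper (hN : IsNorm N) : ∃ C > 0, ∀ x, N x ≤ C * ‖x‖ := by
  set e : Fin n → (Fin n → ℝ) := fun i => Pi.single i 1 with he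
  refine ⟨1 + ∑ i, N (e i), by have : (0:ℝ) ≤ ∑ i, N (e i) := Finset.sum_nonneg fun i _ => hN.nonneg _; linarith, fun x => ?_⟩
  have hx : x = ∑ i, (x i) • e i := by
    funext j
    simp [he, Finset.sum_apply, Pi.single_apply]
  calc N x = N (∑ i, (x i) • e i) := by rw [← hx]
    _ ≤ ∑ i, N ((x i) • e i) := hN.sum_le _ _
    _ = ∑ i, |x i| * N (e i) := by simp [hN.2.1]
    _ ≤ ∑ i, ‖x‖ * N (e i) := by
        refine Finset.sum_le_sum fun i _ => ?_
        exact mul_le_mul_of_nonneg_right (by simpa using norm_le_pi_norm x i) (hN.nonneg _)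
    _ = (∑ i, N (e i)) * ‖x‖ := by rw [Finset.sum_mul]; exact Finset.sum_congr rfl fun i _ => mul_comm _ _
    _ ≤ (1 + ∑ i, N (e i)) * ‖x‖ :=
        mul_le_mul_of_nonneg_right (by linarith) (norm_nonneg x)

lemma IsNorm.continuous (hN : IsNorm N) : Continuous N := by
  obtain ⟨C, hC, hCB⟩ := hN.exists_upper
  rw [Metric.continuous_iff]
  intro x ε hε
  refine ⟨ε / C, by positivity, fun y hy => ?_⟩
  rw [Real.dist_eq, abs_sub_lt_iff]
  have h1 := hN.sub_le y x
  have h2 := hN.sub_le x y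
  have h3 : N (y - x) ≤ C * ‖y - x‖ := hCB _
  have h4 : N (x - y) ≤ C * ‖x - y‖ := hCB _
  rw [dist_eq_norm] at hy
  rw [norm_sub_rev y x] at h3
  have : C * ‖x - y‖ < C * (ε / C) := by
    rw [← dist_eq_norm, dist_comm]; exact mul_lt_mul_of_pos_left hy hC
  rw [mul_div_cancel₀ _ (ne_of_gt hC)] at this
  constructor <;> linarith

lemma IsNorm.exists_lower (hN : IsNorm N) (hn : 0 < n) :
    ∃ c₀ > 0, ∀ x, c₀ * ‖x‖ ≤ N x := by
  have hcpt : IsCompact (Metric.sphere (0 : Fin n → ℝ) 1) := isCompact_sphere _ _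
  have hne : (Metric.sphere (0 : Fin n → ℝ) 1).Nonempty := by
    refine ⟨Pi.single ⟨0, hn⟩ 1, ?_⟩
    simp [Metric.mem_sphere, dist_eq_norm, Pi.norm_single]
  obtain ⟨x₀, hx₀, hmin⟩ := hcpt.exists_isMinOn hne hN.continuous.continuousOn
  have hx₀ne : x₀ ≠ 0 := by
    intro h
    rw [Metric.mem_sphere, dist_eq_norm, sub_zero, h] at hx₀
    simp at hx₀
  have hpos : 0 < N x₀ := lt_of_le_of_ne (hN.nonneg _) (fun h => hx₀ne ((hN.1 x₀).mp h.symm))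
  refine ⟨N x₀, hpos, fun x => ?_⟩
  rcases eq_or_ne x 0 with rfl | hx
  · simp [hN.zero]
  · have hnx : 0 < ‖x‖ := norm_pos_iff.mpr hx
    set u := ‖x‖⁻¹ • x with hu
    have humem : u ∈ Metric.sphere (0 : Fin n → ℝ) 1 := by
      simp [hu, Metric.mem_sphere, dist_eq_norm, norm_smul, abs_of_pos (inv_pos.mpr hnx),
        inv_mul_cancel₀ (ne_of_gt hnx)]
    have := hmin humem
    have hxu : x = ‖x‖ • u := by
      rw [hu, smul_smul, mul_inv_cancel₀ (ne_of_gt hnx), one_smul]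
    have hNx : N x = ‖x‖ * N u := by
      conv_lhs => rw [hxu]
      rw [hN.2.1, abs_of_pos hnx]
    have h5 : N x₀ * ‖x‖ ≤ N u * ‖x‖ := mul_le_mul_of_nonneg_right this (norm_nonneg x)
    nlinarith

lemma IsNorm.fderiv_apply_le (hN : IsNorm N) {z : Fin n → ℝ}
    (hz : DifferentiableAt ℝ N z) (v : Fin n → ℝ) : fderiv ℝ N z v ≤ N v := by
  set L := fderiv ℝ N z
  have hγ : HasDerivAt (fun s : ℝ => z + s • v) v 0 := by
    simpa using ((hasDerivAt_id (0:ℝ)).smul_const v).const_add z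
  have hg : HasDerivAt (fun s : ℝ => N (z + s • v)) (L v) 0 := by
    have hF : HasFDerivAt N L (z + (0:ℝ) • v) := by simpa using hz.hasFDerivAt
    simpa [Function.comp_def] using hF.comp_hasDerivAt 0 hγ
  have hslope := hasDerivAt_iff_tendsto_slope.mp hg
  have hslope' : Tendsto (slope (fun s : ℝ => N (z + s • v)) 0) (nhdsWithin 0 (Ioi 0)) (nhds (L v)) :=
    hslope.mono_left (nhdsWithin_mono 0 (fun x hx => ne_of_gt hx))
  refine le_of_tendsto hslope' ?_
  filter_upwards [self_mem_nhdsWithin] with s hs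
  have hs' : (0:ℝ) < s := hs
  rw [slope_def_field]
  have hb : N (z + s • v) ≤ N z + s * N v := by
    calc N (z + s • v) ≤ N z + N (s • v) := hN.2.2 _ _
      _ = N z + s * N v := by rw [hN.2.1, abs_of_pos hs']
  rw [div_le_iff₀ (by simpa using hs')]
  simp only [zero_smul, add_zero, sub_zero]
  linarith

lemma mulVec_norm_le' (A : Matrix (Fin n) (Fin n) ℝ) (u : Fin n → ℝ) :
    ‖A.mulVec u‖ ≤ (∑ i, ∑ j, |A i j|) * ‖u‖ := by
  have hT : (0:ℝ) ≤ ∑ i, ∑ j, |A i j| :=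
    Finset.sum_nonneg fun i _ => Finset.sum_nonneg fun j _ => abs_nonneg _
  rw [pi_norm_le_iff_of_nonneg (by positivity)]
  intro i
  calc ‖A.mulVec u i‖ = |∑ j, A i j * u j| := by rfl
    _ ≤ ∑ j, |A i j * u j| := Finset.abs_sum_le_sum_abs _ _
    _ = ∑ j, |A i j| * |u j| := by simp [abs_mul]
    _ ≤ ∑ j, |A i j| * ‖u‖ := Finset.sum_le_sum fun j _ =>
        mul_le_mul_of_nonneg_left (by simpa using norm_le_pi_norm u j) (abs_nonneg _)
    _ = (∑ j, |A i j|) * ‖u‖ := by rw [Finset.sum_mul]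
    _ ≤ (∑ i, ∑ j, |A i j|) * ‖u‖ := by
        refine mul_le_mul_of_nonneg_right ?_ (norm_nonneg u)
        exact Finset.single_le_sum (f := fun i => ∑ j, |A i j|) (fun k _ => Finset.sum_nonneg fun j _ => abs_nonneg _)
          (Finset.mem_univ i)

lemma IsNorm.bddAbove_opSet (hN : IsNorm N) (hn : 0 < n) (A : Matrix (Fin n) (Fin n) ℝ) :
    BddAbove ((fun x => N (A.mulVec x)) '' {x | N x = 1}) := by
  obtain ⟨C, hC, hCB⟩ := hN.exists_upper
  obtain ⟨c₀, hc₀, hlow⟩ := hN.exists_lower hn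
  refine ⟨C * ((∑ i, ∑ j, |A i j|) * (1 / c₀)), ?_⟩
  rintro - ⟨x, hx, rfl⟩
  have hxb : ‖x‖ ≤ 1 / c₀ := by
    have := hlow x
    rw [hx] at this
    rw [le_div_iff₀ hc₀]
    linarith
  have hT : (0:ℝ) ≤ ∑ i, ∑ j, |A i j| :=
    Finset.sum_nonneg fun i _ => Finset.sum_nonneg fun j _ => abs_nonneg _
  calc N (A.mulVec x) ≤ C * ‖A.mulVec x‖ := hCB _
    _ ≤ C * ((∑ i, ∑ j, |A i j|) * ‖x‖) :=
        mul_le_mul_of_nonneg_left (mulVec_norm_le' A x) (le_of_lt hC)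
    _ ≤ C * ((∑ i, ∑ j, |A i j|) * (1 / c₀)) := by
        refine mul_le_mul_of_nonneg_left (mul_le_mul_of_nonneg_left hxb hT) (le_of_lt hC)

lemma IsNorm.mulVec_le_opNorm (hN : IsNorm N) (hn : 0 < n) (A : Matrix (Fin n) (Fin n) ℝ)
    (x : Fin n → ℝ) : N (A.mulVec x) ≤ opNorm N A * N x := by
  rcases eq_or_ne x 0 with rfl | hx
  · simp [Matrix.mulVec_zero, hN.zero]
  · have hpos : 0 < N x := lt_of_le_of_ne (hN.nonneg _) (fun h => hx ((hN.1 x).mp h.symm))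
    set u := (N x)⁻¹ • x with hu
    have hNu : N u = 1 := by
      rw [hu, hN.2.1, abs_of_pos (inv_pos.mpr hpos), inv_mul_cancel₀ (ne_of_gt hpos)]
    have hmem : N (A.mulVec u) ∈ (fun x => N (A.mulVec x)) '' {x | N x = 1} :=
      ⟨u, hNu, rfl⟩
    have hle : N (A.mulVec u) ≤ opNorm N A := le_csSup (hN.bddAbove_opSet hn A) hmem
    have hxu : x = (N x) • u := by
      rw [hu, smul_smul, mul_inv_cancel₀ (ne_of_gt hpos), one_smul]
    have : N (A.mulVec x) = N x * N (A.mulVec u) := by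
      conv_lhs => rw [hxu]
      rw [Matrix.mulVec_smul, hN.2.1, abs_of_pos hpos]
    rw [this, mul_comm (opNorm N A)]
    exact mul_le_mul_of_nonneg_left hle (le_of_lt hpos)

lemma IsNorm.fderiv_mulVec_le (hN : IsNorm N) (hn : 0 < n) {z : Fin n → ℝ}
    (hz : DifferentiableAt ℝ N z) {A : Matrix (Fin n) (Fin n) ℝ} {m : ℝ}
    (hm : HasMatrixMeasure N A m) : fderiv ℝ N z (A.mulVec z) ≤ m * N z := by
  set L := fderiv ℝ N z
  set w := A.mulVec z with hw
  have hγ : HasDerivAt (fun s : ℝ => z + s • w) w 0 := by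
    simpa using ((hasDerivAt_id (0:ℝ)).smul_const w).const_add z
  have hg : HasDerivAt (fun s : ℝ => N (z + s • w)) (L w) 0 := by
    have hF : HasFDerivAt N L (z + (0:ℝ) • w) := by simpa using hz.hasFDerivAt
    simpa [Function.comp_def] using hF.comp_hasDerivAt 0 hγ
  have hslope : Tendsto (slope (fun s : ℝ => N (z + s • w)) 0)
      (nhdsWithin 0 (Ioi 0)) (nhds (L w)) :=
    (hasDerivAt_iff_tendsto_slope.mp hg).mono_left
      (nhdsWithin_mono 0 (fun x hx => ne_of_gt hx))
  have hq : Tendsto (fun h : ℝ => ((opNorm N (1 + h • A) - 1) / h) * N z)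
      (nhdsWithin 0 (Ioi 0)) (nhds (m * N z)) := hm.mul_const _
  refine le_of_tendsto_of_tendsto hslope hq ?_
  filter_upwards [self_mem_nhdsWithin] with h hh
  have hh' : (0:ℝ) < h := hh
  have hkey : N (z + h • w) ≤ opNorm N (1 + h • A) * N z := by
    have : z + h • w = (1 + h • A).mulVec z := by
      rw [Matrix.add_mulVec, Matrix.one_mulVec, Matrix.smul_mulVec, hw]
    rw [this]
    exact hN.mulVec_le_opNorm hn _ _
  rw [slope_def_field]
  simp only [zero_smul, add_zero, sub_zero]
  rw [div_mul_eq_mul_div]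
  have hnum : N (z + h • w) - N z ≤ (opNorm N (1 + h • A) - 1) * N z := by
    have := hN.nonneg z
    nlinarith
  exact (div_le_div_iff_of_pos_right hh').mpr hnum

/-- under the contraction hypotheses (`μ(∂F/∂x(t,x)) ≤ c` on a
convex invariant set `𝒳`), for all `x₁, x₂ ∈ 𝒳` and `t ≥ 0`:
`limsup_{(z₁,z₂)→(x₁,x₂), z₁−z₂∉S} d(z₁−z₂)·(F(t,x₁) − F(t,x₂)) ≤ c |x₁ − x₂|`,
where `d(z) = ∇|z|` for `z ∉ S`. -/
theorem clarke_limsup_gradient_bound (n : ℕ) (hn : 0 < n)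
    (N : (Fin n → ℝ) → ℝ) (hN : IsNorm N)
    (S : Set (Fin n → ℝ)) (hS : volume S = 0)
    (hNd : ∀ z ∉ S, DifferentiableAt ℝ N z)
    (X : Set (Fin n → ℝ)) (hX : Convex ℝ X)
    (F : ℝ → (Fin n → ℝ) → (Fin n → ℝ))
    (J : ℝ → (Fin n → ℝ) → Matrix (Fin n) (Fin n) ℝ)
    (hFc : ContinuousOn (fun p : ℝ × (Fin n → ℝ) => F p.1 p.2) (Ici 0 ×ˢ X))
    (hJc : ContinuousOn (fun p : ℝ × (Fin n → ℝ) => J p.1 p.2) (Ici 0 ×ˢ X))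
    (hFd : ∀ t, 0 ≤ t → ∀ x ∈ X,
      HasFDerivWithinAt (F t) ((J t x).mulVecLin.toContinuousLinearMap) X x)
    (c : ℝ)
    (hμ : ∀ t, 0 ≤ t → ∀ x ∈ X,
      ∃ m : ℝ, HasMatrixMeasure N (J t x) m ∧ m ≤ c)
    (t : ℝ) (ht : 0 ≤ t) (x₁ : Fin n → ℝ) (hx₁ : x₁ ∈ X)
    (x₂ : Fin n → ℝ) (hx₂ : x₂ ∈ X) :
    Filter.limsup
        (fun p : (Fin n → ℝ) × (Fin n → ℝ) =>
          fderiv ℝ N (p.1 - p.2) (F t x₁ - F t x₂))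
        (nhdsWithin (x₁, x₂) {p | p.1 - p.2 ∉ S})
      ≤ c * N (x₁ - x₂) := by
  classical
  set w : Fin n → ℝ := x₁ - x₂ with hw
  set T : Set ((Fin n → ℝ) × (Fin n → ℝ)) := {p | p.1 - p.2 ∉ S} with hT
  set l : Filter ((Fin n → ℝ) × (Fin n → ℝ)) := nhdsWithin (x₁, x₂) T with hl
  set f : (Fin n → ℝ) × (Fin n → ℝ) → ℝ :=
    fun p => fderiv ℝ N (p.1 - p.2) (F t x₁ - F t x₂) with hf
  -- the complement of S is dense
  have hdense : Dense Sᶜ := by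
    rw [dense_iff_inter_open]
    intro U hU hUne
    by_contra h
    rw [Set.not_nonempty_iff_eq_empty] at h
    have hsub : U ⊆ S := by
      intro x hx
      by_contra hxS
      exact Set.eq_empty_iff_forall_notMem.mp h x ⟨hx, hxS⟩
    have : volume U = 0 := le_antisymm (hS ▸ measure_mono hsub) (zero_le)
    exact absurd this (ne_of_gt (hU.measure_pos volume hUne))
  -- the filter is non-trivial
  have hNeBot : l.NeBot := by
    rw [hl, ← mem_closure_iff_nhdsWithin_neBot]
    have hφc : Continuous (fun u : Fin n → ℝ => (u + x₂, x₂)) :=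
      ((continuous_id.add continuous_const)).prodMk continuous_const
    have himg : (fun u : Fin n → ℝ => (u + x₂, x₂)) '' Sᶜ ⊆ T := by
      rintro - ⟨u, hu, rfl⟩
      simpa [hT] using hu
    have hwcl : w ∈ closure Sᶜ := hdense w
    have : (x₁, x₂) ∈ (fun u : Fin n → ℝ => (u + x₂, x₂)) '' closure Sᶜ :=
      ⟨w, hwcl, by simp [hw]⟩
    exact Set.mem_of_mem_of_subset
      (Set.mem_of_mem_of_subset this (image_closure_subset_closure_image hφc))
      (closure_mono himg)
  obtain ⟨C, hC, hCB⟩ := hN.exists_upper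
  -- the segment
  set y : ℝ → (Fin n → ℝ) := fun s => x₂ + s • w with hy
  have hyX : ∀ s ∈ Icc (0:ℝ) 1, y s ∈ X := fun s hs => hX.add_smul_sub_mem hx₂ hx₁ hs
  have hycont : Continuous y := continuous_const.add (continuous_id.smul continuous_const)
  -- bound on the Jacobian along the segment
  set B : ℝ → ℝ := fun s => ∑ i, ∑ j, |J t (y s) i j| with hB
  have hBc : ContinuousOn B (Icc 0 1) := by
    have hJy : ContinuousOn (fun s => J t (y s)) (Icc (0:ℝ) 1) := by
      apply hJc.comp ((continuous_const.prodMk hycont).continuousOn)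
      intro s hs
      exact ⟨ht, hyX s hs⟩
    apply continuousOn_finset_sum
    intro i _
    apply continuousOn_finset_sum
    intro j _
    exact ((continuous_abs.comp (continuous_apply_apply i j)).comp_continuousOn hJy)
  obtain ⟨s₀, hs₀, hmax⟩ := (isCompact_Icc (a := (0:ℝ)) (b := 1)).exists_isMaxOn
    ⟨0, by norm_num⟩ hBc
  set M : ℝ := B s₀ with hM
  have hMb : ∀ s ∈ Icc (0:ℝ) 1, B s ≤ M := fun s hs => hmax hs
  have hM0 : 0 ≤ M := le_trans (Finset.sum_nonneg fun i _ =>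
    Finset.sum_nonneg fun j _ => abs_nonneg _) (hMb 0 ⟨le_refl 0, by norm_num⟩)
  -- the eventual bound
  have hev : ∀ᶠ p in l, f p ≤ c * N (p.1 - p.2) + (C * M) * ‖w - (p.1 - p.2)‖ := by
    filter_upwards [self_mem_nhdsWithin] with p hp
    set z : Fin n → ℝ := p.1 - p.2 with hz
    have hzS : z ∉ S := hp
    have hdz : DifferentiableAt ℝ N z := hNd z hzS
    set L := fderiv ℝ N z with hL
    set K : ℝ := c * N z + (C * M) * ‖w - z‖ with hK
    set g : ℝ → ℝ := fun s => L (F t (y s)) with hg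
    set g' : ℝ → ℝ := fun s => L ((J t (y s)).mulVec w) with hg'
    have hyd : ∀ s, HasDerivWithinAt y w (Icc (0:ℝ) 1) s := by
      intro s
      have : HasDerivAt y w s := by
        simpa [hy] using ((hasDerivAt_id s).smul_const w).const_add x₂
      exact this.hasDerivWithinAt
    have hderIcc : ∀ s ∈ Icc (0:ℝ) 1, HasDerivWithinAt g (g' s) (Icc 0 1) s := by
      intro s hs
      have hFy : HasDerivWithinAt (fun s => F t (y s)) ((J t (y s)).mulVec w)
          (Icc 0 1) s := by
        have := (hFd t ht (y s) (hyX s hs)).comp_hasDerivWithinAt s (hyd s)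
          (fun u hu => hyX u hu)
        simpa [Function.comp_def] using this
      have := L.hasFDerivAt.comp_hasDerivWithinAt s hFy
      simpa [Function.comp_def] using this
    have hgc : ContinuousOn g (Icc 0 1) :=
      fun s hs => (hderIcc s hs).continuousWithinAt
    have hder : ∀ s ∈ Ico (0:ℝ) 1, HasDerivWithinAt g (g' s) (Ici s) s := by
      intro s hs
      exact (hderIcc s ⟨hs.1, le_of_lt hs.2⟩).mono_of_mem_nhdsWithin
        (Icc_mem_nhdsGE_of_mem hs)
    have hbound : ∀ s ∈ Ico (0:ℝ) 1, g' s ≤ K := by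
      intro s hs
      have hsIcc : s ∈ Icc (0:ℝ) 1 := ⟨hs.1, le_of_lt hs.2⟩
      obtain ⟨m, hm, hmc⟩ := hμ t ht (y s) (hyX s hsIcc)
      have hsplit : (J t (y s)).mulVec w
          = (J t (y s)).mulVec z + (J t (y s)).mulVec (w - z) := by
        rw [← Matrix.mulVec_add, add_sub_cancel]
      have h1 : L ((J t (y s)).mulVec z) ≤ c * N z := by
        calc L ((J t (y s)).mulVec z) ≤ m * N z := hN.fderiv_mulVec_le hn hdz hm
          _ ≤ c * N z := mul_le_mul_of_nonneg_right hmc (hN.nonneg z)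
      have h2 : L ((J t (y s)).mulVec (w - z)) ≤ (C * M) * ‖w - z‖ := by
        calc L ((J t (y s)).mulVec (w - z)) ≤ N ((J t (y s)).mulVec (w - z)) :=
              hN.fderiv_apply_le hdz _
          _ ≤ C * ‖(J t (y s)).mulVec (w - z)‖ := hCB _
          _ ≤ C * (B s * ‖w - z‖) :=
              mul_le_mul_of_nonneg_left (mulVec_norm_le' _ _) (le_of_lt hC)
          _ ≤ C * (M * ‖w - z‖) := by
              refine mul_le_mul_of_nonneg_left
                (mul_le_mul_of_nonneg_right (hMb s hsIcc) (norm_nonneg _)) (le_of_lt hC)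
          _ = (C * M) * ‖w - z‖ := by ring
      have hsum : g' s = L ((J t (y s)).mulVec z) + L ((J t (y s)).mulVec (w - z)) := by
        show L ((J t (y s)).mulVec w) = _
        rw [hsplit, map_add]
      rw [hsum, hK]
      exact add_le_add h1 h2
    have hBd : ∀ s ∈ Ico (0:ℝ) 1, HasDerivWithinAt (fun s => g 0 + K * s) K (Ici s) s := by
      intro s _
      have : HasDerivAt (fun s : ℝ => g 0 + K * s) K s := by
        simpa using ((hasDerivAt_id s).const_mul K).const_add (g 0)
      exact this.hasDerivWithinAt
    have hmvt := image_le_of_deriv_right_le_deriv_boundary hgc hder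
      (by simp : g 0 ≤ g 0 + K * 0) (by fun_prop) hBd hbound
    have hg1 : g 1 ≤ g 0 + K := by
      have := hmvt (right_mem_Icc.mpr (by norm_num : (0:ℝ) ≤ 1))
      simpa using this
    have hy1 : y 1 = x₁ := by rw [hy]; simp [hw]
    have hy0 : y 0 = x₂ := by rw [hy]; simp
    have hfp : f p = g 1 - g 0 := by
      show (fderiv ℝ N (p.1 - p.2)) (F t x₁ - F t x₂) = L (F t (y 1)) - L (F t (y 0))
      rw [hy1, hy0, ← map_sub]
    rw [hfp]
    rw [hK] at hg1
    linarith
  -- the comparison function tends to c * N w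
  have hsubt : Tendsto (fun p : (Fin n → ℝ) × (Fin n → ℝ) => p.1 - p.2) l (nhds w) := by
    have : Tendsto (fun p : (Fin n → ℝ) × (Fin n → ℝ) => p.1 - p.2)
        (nhds (x₁, x₂)) (nhds w) := by
      rw [hw]
      exact (continuous_fst.sub continuous_snd).tendsto (x₁, x₂)
    exact this.mono_left nhdsWithin_le_nhds
  have hφt : Tendsto (fun p : (Fin n → ℝ) × (Fin n → ℝ) =>
      c * N (p.1 - p.2) + (C * M) * ‖w - (p.1 - p.2)‖) l (nhds (c * N w)) := by
    have h1 : Tendsto (fun p : (Fin n → ℝ) × (Fin n → ℝ) => c * N (p.1 - p.2)) l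
        (nhds (c * N w)) := (tendsto_const_nhds.mul ((hN.continuous.tendsto w).comp hsubt))
    have h2 : Tendsto (fun p : (Fin n → ℝ) × (Fin n → ℝ) => (C * M) * ‖w - (p.1 - p.2)‖) l
        (nhds 0) := by
      have : Tendsto (fun p : (Fin n → ℝ) × (Fin n → ℝ) => ‖w - (p.1 - p.2)‖) l (nhds 0) := by
        have hcn : Continuous (fun u : Fin n → ℝ => ‖w - u‖) :=
          (continuous_const.sub continuous_id).norm
        have hn2 : Tendsto (fun u : Fin n → ℝ => ‖w - u‖) (nhds w) (nhds 0) := by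
          simpa using hcn.tendsto w
        exact hn2.comp hsubt
      simpa using tendsto_const_nhds.mul this
    simpa using h1.add h2
  -- conclude
  have hcob : IsCoboundedUnder (· ≤ ·) l f := by
    apply isCoboundedUnder_le_of_eventually_le l (x := -N (F t x₁ - F t x₂))
    filter_upwards [self_mem_nhdsWithin] with p hp
    have hdz : DifferentiableAt ℝ N (p.1 - p.2) := hNd _ hp
    have := hN.fderiv_apply_le hdz (-(F t x₁ - F t x₂))
    rw [map_neg, hN.neg] at this
    rw [hf]
    linarith
  calc Filter.limsup f l
      ≤ Filter.limsup (fun p : (Fin n → ℝ) × (Fin n → ℝ) =>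
          c * N (p.1 - p.2) + (C * M) * ‖w - (p.1 - p.2)‖) l :=
        Filter.limsup_le_limsup hev hcob hφt.isBoundedUnder_le
    _ = c * N w := hφt.limsup_eq
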